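/- arXiv:2305.17989 — 6 statements merged into one kernel-verified Lean document; each statement's English description precedes it below -/
import Mathlib

section
/- Let Π be a finite set partitioned into sink members V and non-sink members Π \ V, with F ⊆ Π faulty, |F| ≤ f, and |V \ F| ≥ 2f + 1. Suppose every slice of a sink member is a subset of V of size ⌈(|V| + f + 1)/2⌉, and every slice of a non-sink member is a subset of V of size f + 1. Then every quorum Q (a set where every member has a slice contained in Q) that contains at least one process with a slice has |Q ∩ V| ≥ ⌈(|V| + f + 1)/2⌉. -/
/-- A set `Q` is a quorum if every member has some slice contained in `Q`. -/
def IsQuorum {α : Type*} (slices : α → Finset (Finset α)) (Q : Finset α) : Prop :=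
  ∀ i ∈ Q, ∃ S ∈ slices i, S ⊆ Q

theorem stmt_6 {α : Type*} [DecidableEq α] (f : ℕ) (P V F : Finset α)
    (slices : α → Finset (Finset α))
    (hVP : V ⊆ P) (hFP : F ⊆ P) (hF : F.card ≤ f)
    (hcorrect : (V \ F).card ≥ 2 * f + 1)
    (hsink : ∀ i ∈ V, ∀ S ∈ slices i, S ⊆ V ∧ S.card = (V.card + f + 1 + 1) / 2)
    (hnonsink : ∀ i ∈ P \ V, ∀ S ∈ slices i, S ⊆ V ∧ S.card = f + 1)
    (Q : Finset α) (hQP : Q ⊆ P) (hQ : IsQuorum slices Q) (hQne : Q.Nonempty) :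
    (Q ∩ V).card ≥ (V.card + f + 1 + 1) / 2 := by
  -- It suffices to find a sink member in Q
  have key : ∀ j ∈ Q, j ∈ V → (Q ∩ V).card ≥ (V.card + f + 1 + 1) / 2 := by
    intro j hjQ hjV
    obtain ⟨S, hS, hSQ⟩ := hQ j hjQ
    obtain ⟨hSV, hScard⟩ := hsink j hjV S hS
    calc (V.card + f + 1 + 1) / 2 = S.card := hScard.symm
    _ ≤ (Q ∩ V).card := Finset.card_le_card (fun x hx =>
        Finset.mem_inter.2 ⟨hSQ hx, hSV hx⟩)
  obtain ⟨i, hi⟩ := hQne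
  by_cases hiV : i ∈ V
  · exact key i hi hiV
  · obtain ⟨S, hS, hSQ⟩ := hQ i hi
    obtain ⟨hSV, hScard⟩ := hnonsink i (Finset.mem_sdiff.2 ⟨hQP hi, hiV⟩) S hS
    have hSne : S.Nonempty := Finset.card_pos.1 (by omega)
    obtain ⟨j, hj⟩ := hSne
    exact key j (hSQ hj) (hSV hj)
end

section
/- Let Π be a finite set, V ⊆ Π the sink, F ⊆ Π with |F| ≤ f, |V \ F| ≥ 2f + 1. With slices as in Algorithm 2 (sink members: all ⌈(|V|+f+1)/2⌉-subsets of V; non-sink members: all (f+1)-subsets of V), any two quorums Q₁ and Q₂ (each containing at least one member) satisfy |Q₁ ∩ Q₂ ∩ V| > f. -/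
theorem stmt_7 {α : Type*} [DecidableEq α] (f : ℕ) (P V F : Finset α)
    (slices : α → Finset (Finset α))
    (hVP : V ⊆ P) (hFP : F ⊆ P) (hF : F.card ≤ f)
    (hcorrect : (V \ F).card ≥ 2 * f + 1)
    (hsink : ∀ i ∈ V, slices i = Finset.powersetCard ((V.card + f + 1 + 1) / 2) V)
    (hnonsink : ∀ i ∈ P \ V, slices i = Finset.powersetCard (f + 1) V)
    (Q₁ Q₂ : Finset α) (h1P : Q₁ ⊆ P) (h2P : Q₂ ⊆ P)
    (h1 : IsQuorum slices Q₁) (h2 : IsQuorum slices Q₂)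
    (h1ne : Q₁.Nonempty) (h2ne : Q₂.Nonempty) :
    (Q₁ ∩ Q₂ ∩ V).card > f := by
  set k := (V.card + f + 1 + 1) / 2 with hk
  have key : ∀ Q : Finset α, Q ⊆ P → IsQuorum slices Q → Q.Nonempty →
      k ≤ (Q ∩ V).card := by
    intro Q hQP hQ ⟨i, hi⟩
    have sink : ∀ j ∈ V, j ∈ Q → k ≤ (Q ∩ V).card := by
      intro j hjV hjQ
      obtain ⟨S, hS, hSQ⟩ := hQ j hjQ
      rw [hsink j hjV, Finset.mem_powersetCard] at hS
      calc k = S.card := hS.2.symm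
        _ ≤ (Q ∩ V).card := Finset.card_le_card
            (Finset.subset_inter hSQ hS.1)
    by_cases hiV : i ∈ V
    · exact sink i hiV hi
    · obtain ⟨S, hS, hSQ⟩ := hQ i hi
      rw [hnonsink i (Finset.mem_sdiff.2 ⟨hQP hi, hiV⟩), Finset.mem_powersetCard] at hS
      have : S.Nonempty := by
        rw [← Finset.card_pos, hS.2]; omega
      obtain ⟨j, hj⟩ := this
      exact sink j (hS.1 hj) (hSQ hj)
  have h1k := key Q₁ h1P h1 h1ne
  have h2k := key Q₂ h2P h2 h2ne
  have hn : 2 * f + 1 ≤ V.card :=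
    le_trans hcorrect (Finset.card_le_card (Finset.sdiff_subset))
  have hunion : ((Q₁ ∩ V) ∪ (Q₂ ∩ V)).card ≤ V.card :=
    Finset.card_le_card (Finset.union_subset Finset.inter_subset_right Finset.inter_subset_right)
  have hia := Finset.card_inter_add_card_union (Q₁ ∩ V) (Q₂ ∩ V)
  have heq : (Q₁ ∩ V) ∩ (Q₂ ∩ V) = Q₁ ∩ Q₂ ∩ V := by
    ext x; simp [Finset.mem_inter]
  rw [heq] at hia
  omega
end

section
/- Let V be a finite set with |V| ≥ 2f + 1 + |F| for F ⊆ V, |F| ≤ f, and assign to each element of V as slices all subsets of V of size ⌈(|V|+f+1)/2⌉. Then there exists a quorum Q ⊆ V \ F, i.e., a set of correct sink members such that every member of Q has a slice contained in Q. -/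
theorem stmt_8 {α : Type*} [DecidableEq α] (f : ℕ) (V F : Finset α)
    (slices : α → Finset (Finset α))
    (hFV : F ⊆ V) (hF : F.card ≤ f) (hn : V.card ≥ 2 * f + 1 + F.card)
    (hslices : ∀ i ∈ V, slices i = Finset.powersetCard ((V.card + f + 1 + 1) / 2) V) :
    ∃ Q : Finset α, Q ⊆ V \ F ∧ Q.Nonempty ∧ IsQuorum slices Q := by
  set k := (V.card + f + 1 + 1) / 2 with hk
  have hcard : (V \ F).card = V.card - F.card := Finset.card_sdiff_of_subset hFV
  have hkle : k ≤ (V \ F).card := by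
    rw [hcard]
    omega
  obtain ⟨Q, hQsub, hQcard⟩ := Finset.exists_subset_card_eq hkle
  refine ⟨Q, hQsub, ?_, ?_⟩
  · rw [← Finset.card_pos, hQcard]; omega
  · intro i hi
    have hiV : i ∈ V := (Finset.sdiff_subset (hQsub hi))
    refine ⟨Q, ?_, le_refl _⟩
    rw [hslices i hiV, Finset.mem_powersetCard]
    exact ⟨hQsub.trans Finset.sdiff_subset, hQcard⟩
end

section
/- Let Π be finite with sink V ⊆ Π, F faulty with |F| ≤ f and |V \ F| ≥ 2f + 1. With Algorithm 2 slices (sink members: all ⌈(|V|+f+1)/2⌉-subsets of V; non-sink members: all (f+1)-subsets of V, where each non-sink member's slices may be restricted to subsets containing at least f+1 correct sink members as guaranteed by the sink detector), every process (sink or non-sink) has a quorum consisting entirely of correct processes. -/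
theorem stmt_9 {α : Type*} [DecidableEq α] (f : ℕ) (P V F : Finset α)
    (slices : α → Finset (Finset α))
    (hVP : V ⊆ P) (hFP : F ⊆ P) (hF : F.card ≤ f)
    (hcorrect : (V \ F).card ≥ 2 * f + 1)
    (hsink : ∀ i ∈ V, slices i = Finset.powersetCard ((V.card + f + 1 + 1) / 2) V)
    (hnonsink : ∀ i ∈ P \ V,
      (∀ S ∈ slices i, S ⊆ V ∧ S.card = f + 1) ∧ ∃ S ∈ slices i, S ⊆ V \ F) :
    ∀ i ∈ P, i ∉ F →
      ∃ Q : Finset α, i ∈ Q ∧ Q ⊆ P \ F ∧ IsQuorum slices Q := by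
  intro i hiP hiF
  refine ⟨insert i (V \ F), Finset.mem_insert_self _ _, ?_, ?_⟩
  · intro x hx
    rcases Finset.mem_insert.1 hx with rfl | hx
    · exact Finset.mem_sdiff.2 ⟨hiP, hiF⟩
    · rcases Finset.mem_sdiff.1 hx with ⟨hxV, hxF⟩
      exact Finset.mem_sdiff.2 ⟨hVP hxV, hxF⟩
  · -- key cardinality fact
    have hVF : V.card ≤ (V \ F).card + f := by
      have := Finset.card_le_card_sdiff_add_card (s := V) (t := F)
      omega
    have hk : (V.card + f + 1 + 1) / 2 ≤ (V \ F).card := by omega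
    intro j hj
    by_cases hjV : j ∈ V
    · obtain ⟨T, hTsub, hTcard⟩ := Finset.exists_subset_card_eq hk
      refine ⟨T, ?_, ?_⟩
      · rw [hsink j hjV, Finset.mem_powersetCard]
        exact ⟨hTsub.trans Finset.sdiff_subset, hTcard⟩
      · exact hTsub.trans (Finset.subset_insert _ _)
    · have hji : j = i := by
        rcases Finset.mem_insert.1 hj with rfl | hj
        · rfl
        · exact absurd (Finset.mem_sdiff.1 hj).1 hjV
      subst hji
      obtain ⟨_, S, hS, hSsub⟩ := hnonsink j (Finset.mem_sdiff.2 ⟨hiP, hjV⟩)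
      exact ⟨S, hS, hSsub.trans (Finset.subset_insert _ _)⟩
end

section
/- There exists a finite directed graph G on 7 vertices and an assignment of slices where each process i's slices are all subsets of its out-neighborhood PDᵢ of size |PDᵢ| − 1, such that each vertex has out-degree 3, the construction satisfies: every slice of i is contained in PDᵢ, and for every set B ⊆ PDᵢ with |B| ≤ 1 some slice of i avoids B; yet there exist two disjoint quorums Q₁ and Q₂. -/
theorem stmt_10 :
    ∃ PD : Fin 7 → Finset (Fin 7),
      -- slices of i are all subsets of PDᵢ of size |PDᵢ| − 1
      let slices : Fin 7 → Finset (Finset (Fin 7)) :=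
        fun i => Finset.powersetCard ((PD i).card - 1) (PD i)
      (∀ i, (PD i).card = 3) ∧
      (∀ i, ∀ S ∈ slices i, S ⊆ PD i) ∧
      (∀ i, ∀ B ⊆ PD i, B.card ≤ 1 → ∃ S ∈ slices i, Disjoint S B) ∧
      ∃ Q₁ Q₂ : Finset (Fin 7), Q₁.Nonempty ∧ Q₂.Nonempty ∧
        IsQuorum slices Q₁ ∧ IsQuorum slices Q₂ ∧ Disjoint Q₁ Q₂ := by
  refine ⟨![{1,2,3},{0,2,3},{0,1,3},{0,1,2},{0,5,6},{3,4,6},{2,4,5}], ?_⟩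
  set_option maxRecDepth 10000 in
  refine ⟨by decide, by decide, by decide, {4,5,6}, {0,1,2,3}, by decide, by decide, ?_, ?_, by decide⟩
  · intro i hi; fin_cases hi <;> decide
  · intro i hi; fin_cases hi <;> decide
end

section
/- Suppose for a finite set Π with fault threshold f: (a) any two quorums of correct sink members intersect in more than f elements, (b) any quorum of a correct non-sink member contains a correct sink member, and (c) any quorum Q containing a sink member k also satisfies that Q is a quorum of k. Then any two quorums of correct processes (sink or non-sink) intersect in more than f elements. -/
theorem stmt_17 {α : Type*} [DecidableEq α] (f : ℕ)
    (correct sink : α → Prop) (𝒬 : α → Set (Finset α))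
    (ha : ∀ i j, correct i → sink i → correct j → sink j →
      ∀ Q ∈ 𝒬 i, ∀ Q' ∈ 𝒬 j, (Q ∩ Q').card > f)
    (hb : ∀ i, correct i → ¬ sink i → ∀ Q ∈ 𝒬 i, ∃ k ∈ Q, correct k ∧ sink k)
    (hc : ∀ (k i : α), sink k → ∀ Q ∈ 𝒬 i, k ∈ Q → Q ∈ 𝒬 k) :
    ∀ i j, correct i → correct j →
      ∀ Q ∈ 𝒬 i, ∀ Q' ∈ 𝒬 j, (Q ∩ Q').card > f := by
  have key : ∀ i, correct i → ∀ Q ∈ 𝒬 i, ∃ k, correct k ∧ sink k ∧ Q ∈ 𝒬 k := by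
    intro i hi Q hQ
    by_cases hs : sink i
    · exact ⟨i, hi, hs, hQ⟩
    · obtain ⟨k, hkQ, hk, hks⟩ := hb i hi hs Q hQ
      exact ⟨k, hk, hks, hc k i hks Q hQ hkQ⟩
  intro i j hi hj Q hQ Q' hQ'
  obtain ⟨k, hk, hks, hQk⟩ := key i hi Q hQ
  obtain ⟨k', hk', hks', hQk'⟩ := key j hj Q' hQ'
  exact ha k k' hk hks hk' hks' Q hQk Q' hQk'
end
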